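/- Let Ω ⊆ ℂ be open, f : Ω → ℂ be continuously differentiable (as a function of two real variables), and S ⊆ ℂ. Let p ∈ Ω ∩ S, and suppose there exist two unit complex numbers t₁, t₂ with t₁ ≠ t₂ and t₁ ≠ -t₂ such that both t₁ and t₂ are limit directions of S at p. If there is a holomorphic function F on a neighborhood of p with F = f on S near p, then ∂f/∂z̄ = 0 at p. -/

import Mathlib

open Complex Filter

/-- `t` is a limit direction of `S` at `p`. -/
def IsLimitDirection (S : Set ℂ) (p t : ℂ) : Prop :=
  ‖t‖ = 1 ∧ ∃ q : ℕ → ℂ, (∀ j, q j ∈ S \ {p}) ∧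
    Tendsto q atTop (nhds p) ∧
    Tendsto (fun j => (q j - p) / (‖q j - p‖ : ℂ)) atTop (nhds t)

/-- If `g` vanishes along a sequence tending to `p` with limit direction `t`, and
`g` is differentiable at `p` with `g p = 0`, then the derivative kills `t`. -/
lemma key_dir (g : ℂ → ℂ) (p t : ℂ) (L : ℂ →L[ℝ] ℂ) (hg : HasFDerivAt g L p)
    (q : ℕ → ℂ) (hq0 : ∀ᶠ j in atTop, g (q j) = 0) (hgp : g p = 0)
    (hqne : ∀ j, q j ≠ p) (hqt : Tendsto q atTop (nhds p))
    (hdir : Tendsto (fun j => (q j - p) / (‖q j - p‖ : ℂ)) atTop (nhds t)) :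
    L t = 0 := by
  have hlo := hg.isLittleO
  have h2 : (fun j => L (q j - p)) =o[atTop] fun j => q j - p := by
    have h2' : (fun j => -(L (q j - p))) =o[atTop] fun j => q j - p := by
      refine (hlo.comp_tendsto hqt).congr' ?_ EventuallyEq.rfl
      filter_upwards [hq0] with j hj
      simp [hj, hgp]
    simpa using h2'.neg_left
  have h3 : Tendsto (fun j => ‖L (q j - p)‖ / ‖q j - p‖) atTop (nhds 0) :=
    h2.norm_norm.tendsto_div_nhds_zero
  have hval : ∀ j, L ((q j - p) / (‖q j - p‖ : ℂ)) =
      (‖q j - p‖⁻¹ : ℝ) • L (q j - p) := by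
    intro j
    rw [← map_smul]
    congr 1
    rw [Complex.real_smul]
    push_cast
    field_simp
  have h6 : Tendsto (fun j => ‖L ((q j - p) / (‖q j - p‖ : ℂ))‖) atTop (nhds 0) := by
    refine h3.congr fun j => ?_
    rw [hval j, norm_smul]
    simp [norm_inv, div_eq_inv_mul]
  have h5 : Tendsto (fun j => L ((q j - p) / (‖q j - p‖ : ℂ))) atTop (nhds (L t)) :=
    (L.continuous.tendsto t).comp hdir
  have h7 : Tendsto (fun j => ‖L ((q j - p) / (‖q j - p‖ : ℂ))‖) atTop (nhds ‖L t‖) :=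
    (continuous_norm.tendsto _).comp h5
  have : ‖L t‖ = 0 := tendsto_nhds_unique h7 h6
  exact norm_eq_zero.mp this

theorem stmt0 (Ω S : Set ℂ) (hΩ : IsOpen Ω) (f : ℂ → ℂ)
    (hf : ContDiffOn ℝ 1 f Ω) (p : ℂ) (hp : p ∈ Ω ∩ S)
    (t₁ t₂ : ℂ) (h1 : IsLimitDirection S p t₁) (h2 : IsLimitDirection S p t₂)
    (hne : t₁ ≠ t₂) (hne' : t₁ ≠ -t₂)
    (hext : ∃ U F, IsOpen U ∧ p ∈ U ∧ DifferentiableOn ℂ F U ∧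
      Set.EqOn f F (S ∩ U)) :
    (1 / 2 : ℂ) * (fderiv ℝ f p 1 + Complex.I * fderiv ℝ f p Complex.I) = 0 := by
  obtain ⟨U, F, hU, hpU, hF, hEq⟩ := hext
  -- differentiability facts
  have hfdiff : DifferentiableAt ℝ f p :=
    (hf.differentiableOn one_ne_zero).differentiableAt (hΩ.mem_nhds hp.1)
  have hFdiffC : DifferentiableAt ℂ F p := hF.differentiableAt (hU.mem_nhds hpU)
  have hFdiff : DifferentiableAt ℝ F p := hFdiffC.restrictScalars ℝ
  set g : ℂ → ℂ := fun z => f z - F z with hgdef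
  have hgdiff : DifferentiableAt ℝ g p := hfdiff.sub hFdiff
  set L : ℂ →L[ℝ] ℂ := fderiv ℝ g p with hL
  have hgfd : HasFDerivAt g L p := hgdiff.hasFDerivAt
  have hgp : g p = 0 := by
    have : f p = F p := hEq ⟨hp.2, hpU⟩
    simp [hgdef, this]
  -- the derivative of g kills both limit directions
  have hLdir : ∀ t : ℂ, IsLimitDirection S p t → L t = 0 := by
    rintro t ⟨htn, q, hqS, hqt, hdir⟩
    have hq0 : ∀ᶠ j in atTop, g (q j) = 0 := by
      have hU' : ∀ᶠ j in atTop, q j ∈ U := hqt.eventually (hU.eventually_mem hpU)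
      filter_upwards [hU'] with j hj
      have : f (q j) = F (q j) := hEq ⟨(hqS j).1, hj⟩
      simp [hgdef, this]
    exact key_dir g p t L hgfd q hq0 hgp (fun j => (hqS j).2) hqt hdir
  have e1 := hLdir t₁ h1
  have e2 := hLdir t₂ h2
  -- decompose L via L 1 and L I
  set u : ℂ := L 1 with hu
  set v : ℂ := L Complex.I with hv
  have hdecomp : ∀ t : ℂ, L t = (t.re : ℂ) * u + (t.im : ℂ) * v := by
    intro t
    have ht : t = (t.re : ℝ) • (1 : ℂ) + (t.im : ℝ) • Complex.I := by
      simp [Complex.real_smul, Complex.re_add_im]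
    calc L t = L ((t.re : ℝ) • (1 : ℂ) + (t.im : ℝ) • Complex.I) := by rw [← ht]
      _ = (t.re : ℝ) • L 1 + (t.im : ℝ) • L Complex.I := by
          rw [map_add, map_smul, map_smul]
      _ = (t.re : ℂ) * u + (t.im : ℂ) * v := by
          simp [Complex.real_smul, hu, hv]
  rw [hdecomp t₁] at e1
  rw [hdecomp t₂] at e2
  -- determinant nonzero since t₁, t₂ are independent unit vectors
  have hd : (t₁.re * t₂.im - t₁.im * t₂.re : ℝ) ≠ 0 := by
    intro hd0
    have ht1 : ‖t₁‖ = 1 := h1.1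
    have ht2 : ‖t₂‖ = 1 := h2.1
    set w : ℂ := (starRingEnd ℂ) t₁ * t₂ with hw
    have hwim : w.im = 0 := by
      simp only [hw, Complex.mul_im, Complex.conj_re, Complex.conj_im]
      linarith
    have hwre : w = (w.re : ℂ) := by
      apply Complex.ext <;> simp [hwim]
    have hwn : ‖w‖ = 1 := by
      rw [hw, norm_mul, RCLike.norm_conj, ht1, ht2, one_mul]
    have habs : |w.re| = 1 := by
      rw [hwre] at hwn
      simpa using hwn
    have ht1c : t₁ * (starRingEnd ℂ) t₁ = 1 := by
      rw [Complex.mul_conj]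
      norm_cast
      rw [← Complex.sq_norm] at *
      rw [ht1]; norm_num
    have ht2eq : t₂ = w * t₁ := by
      rw [hw]
      calc t₂ = (t₁ * (starRingEnd ℂ) t₁) * t₂ := by rw [ht1c, one_mul]
        _ = (starRingEnd ℂ) t₁ * t₂ * t₁ := by ring
    rcases abs_eq (by norm_num : (0:ℝ) ≤ 1) |>.mp habs with h | h
    · apply hne
      rw [ht2eq, hwre, h]
      simp
    · apply hne'
      rw [ht2eq, hwre, h]
      push_cast
      ring
  -- solve the linear system: u = v = 0
  have hdC : ((t₁.re * t₂.im - t₁.im * t₂.re : ℝ) : ℂ) ≠ 0 := by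
    exact_mod_cast hd
  have hu0 : u = 0 := by
    have h : ((t₁.re * t₂.im - t₁.im * t₂.re : ℝ) : ℂ) * u = 0 := by
      push_cast
      linear_combination (t₂.im : ℂ) * e1 - (t₁.im : ℂ) * e2
    exact (mul_eq_zero.mp h).resolve_left hdC
  have hv0 : v = 0 := by
    have h : ((t₁.re * t₂.im - t₁.im * t₂.re : ℝ) : ℂ) * v = 0 := by
      push_cast
      linear_combination (t₁.re : ℂ) * e2 - (t₂.re : ℂ) * e1
    exact (mul_eq_zero.mp h).resolve_left hdC
  -- combine with holomorphy of F
  set D : ℂ →L[ℝ] ℂ := (fderiv ℂ F p).restrictScalars ℝ with hD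
  have hfF : HasFDerivAt f (L + D) p := by
    have h := hgfd.add (hFdiffC.hasFDerivAt.restrictScalars ℝ)
    have : (fun z => g z + F z) = f := by funext z; simp [hgdef]
    rwa [show g + F = f from this] at h
  have hf1 : fderiv ℝ f p 1 = u + D 1 := by rw [hfF.fderiv]; rfl
  have hfI : fderiv ℝ f p Complex.I = v + D Complex.I := by rw [hfF.fderiv]; rfl
  have hDI : D Complex.I = Complex.I * D 1 := by
    have h := map_smul (fderiv ℂ F p) Complex.I (1 : ℂ)
    simpa [hD, smul_eq_mul] using h
  rw [hf1, hfI, hDI, hu0, hv0]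
  have hI := Complex.I_mul_I
  linear_combination (D 1 / 2) * hI
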